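/- Let A be a nonnegative m×n matrix and x' a nonnegative vector such that for every row i and every pair of distinct column indices u,v with a_{iu},a_{iv} > 0 we have a_{iu}x'_u + a_{iv}x'_v ≤ 1. Suppose each row of A has at least 2 and at most Δ positive entries. Define x_v = 2x'_v / max{|supp(a_i)| : a_{iv} > 0}, where supp(a_i) denotes the set of columns with positive entries in row i. Then x satisfies A x ≤ 1 (componentwise). -/

import Mathlib

open Finset

/-- Degree-reduction transformation for max-min LPs: feasibility of the
scaled-back solution.  `A` is a nonnegative `m × n` matrix, `x'` a nonnegative
vector satisfying all pairwise constraints `a_{iu} x'_u + a_{iv} x'_v ≤ 1`;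
every row of `A` has between `2` and `Δ` positive entries.  The vector
`x_v = 2 x'_v / max{|supp(a_i)| : a_{iv} > 0}` satisfies `A x ≤ 1`. -/
theorem stmt_0 (m n Δ : ℕ) (A : Fin m → Fin n → ℝ) (x' x : Fin n → ℝ)
    (hA : ∀ i v, 0 ≤ A i v)
    (hx' : ∀ v, 0 ≤ x' v)
    (hsupp : ∀ i, 2 ≤ (univ.filter (fun v => 0 < A i v)).card ∧
      (univ.filter (fun v => 0 < A i v)).card ≤ Δ)
    (hpair : ∀ i (u v : Fin n), u ≠ v → 0 < A i u → 0 < A i v →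
      A i u * x' u + A i v * x' v ≤ 1)
    (hx : ∀ v, x v = 2 * x' v /
      (((univ.filter (fun i => 0 < A i v)).sup
        (fun i => (univ.filter (fun u => 0 < A i u)).card) : ℕ) : ℝ)) :
    ∀ i, ∑ v, A i v * x v ≤ 1 := by
  intro i
  classical
  set S : Finset (Fin n) := univ.filter (fun v => 0 < A i v) with hS
  have hk2 : 2 ≤ S.card := (hsupp i).1
  have hkpos : (0:ℝ) < (S.card : ℝ) := by
    have : 0 < S.card := by omega
    exact_mod_cast this
  have hkR : (2:ℝ) ≤ (S.card : ℝ) := by exact_mod_cast hk2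
  set T := ∑ v ∈ S, A i v * x' v with hTdef
  -- key: 2 (k-1) T ≤ k (k-1)
  have hexp : ∑ u ∈ S, ∑ v ∈ S \ {u}, (A i u * x' u + A i v * x' v)
      = 2 * ((S.card : ℝ) - 1) * T := by
    have h1 : ∀ u ∈ S, ∑ v ∈ S \ {u}, (A i u * x' u + A i v * x' v)
        = ((S.card : ℝ) - 1) * (A i u * x' u) + (T - A i u * x' u) := by
      intro u hu
      have hsub : {u} ⊆ S := by simpa using hu
      have hcard : ((S \ {u}).card : ℝ) = (S.card : ℝ) - 1 := by
        rw [Finset.card_sdiff_of_subset hsub]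
        have : 1 ≤ S.card := by omega
        simp only [Finset.card_singleton]
        rw [Nat.cast_sub this]
        simp
      rw [Finset.sum_add_distrib, Finset.sum_const, nsmul_eq_mul, hcard,
        Finset.sum_sdiff_eq_sub hsub]
      simp [hTdef]
    rw [Finset.sum_congr rfl h1, Finset.sum_add_distrib, Finset.sum_sub_distrib,
      ← Finset.mul_sum, Finset.sum_const, nsmul_eq_mul, ← hTdef]
    ring
  have hbound : ∑ u ∈ S, ∑ v ∈ S \ {u}, (A i u * x' u + A i v * x' v)
      ≤ (S.card : ℝ) * ((S.card : ℝ) - 1) := by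
    calc ∑ u ∈ S, ∑ v ∈ S \ {u}, (A i u * x' u + A i v * x' v)
        ≤ ∑ u ∈ S, ∑ v ∈ S \ {u}, (1:ℝ) := by
          apply Finset.sum_le_sum
          intro u hu
          apply Finset.sum_le_sum
          intro v hv
          have hvS : v ∈ S := (Finset.mem_sdiff.mp hv).1
          have hne : u ≠ v := by
            have := (Finset.mem_sdiff.mp hv).2
            simp at this
            exact fun h => this h.symm
          exact hpair i u v hne (by simpa [hS] using hu) (by simpa [hS] using hvS)
      _ = (S.card : ℝ) * ((S.card : ℝ) - 1) := by
          have hcard : ∀ u ∈ S, ((S \ {u}).card : ℝ) = (S.card : ℝ) - 1 := by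
            intro u hu
            have hsub : ({u} : Finset (Fin n)) ⊆ S := by simpa using hu
            rw [Finset.card_sdiff_of_subset hsub]
            have : 1 ≤ S.card := by omega
            simp only [Finset.card_singleton]
            rw [Nat.cast_sub this]
            simp
          rw [Finset.sum_congr rfl (fun u hu => by
            rw [Finset.sum_const, nsmul_eq_mul, mul_one, hcard u hu])]
          rw [Finset.sum_const, nsmul_eq_mul]
  have hT : T ≤ (S.card : ℝ) / 2 := by
    have h1 : (0:ℝ) < (S.card : ℝ) - 1 := by linarith
    nlinarith [hexp ▸ hbound]
  -- bound each term
  have hterm : ∀ v ∈ S, A i v * x v ≤ A i v * (2 * x' v / (S.card : ℝ)) := by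
    intro v hv
    have hvpos : 0 < A i v := by simpa [hS] using hv
    set D : ℕ := (univ.filter (fun i => 0 < A i v)).sup
        (fun i => (univ.filter (fun u => 0 < A i u)).card) with hD
    have hle : S.card ≤ D := by
      apply Finset.le_sup (f := fun i => (univ.filter (fun u => 0 < A i u)).card)
      simp [hvpos]
    have hleR : (S.card : ℝ) ≤ (D : ℝ) := by exact_mod_cast hle
    have hxv : x v = 2 * x' v / (D : ℝ) := hx v
    rw [hxv]
    apply mul_le_mul_of_nonneg_left _ (hA i v)
    apply div_le_div_of_nonneg_left _ hkpos hleR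
    have := hx' v
    linarith
  calc ∑ v, A i v * x v = ∑ v ∈ S, A i v * x v := by
        rw [hS]
        rw [Finset.sum_filter]
        apply Finset.sum_congr rfl
        intro v _
        by_cases h : 0 < A i v
        · simp [h]
        · have : A i v = 0 := le_antisymm (not_lt.mp h) (hA i v)
          simp [h, this]
    _ ≤ ∑ v ∈ S, A i v * (2 * x' v / (S.card : ℝ)) := Finset.sum_le_sum hterm
    _ = (2 / (S.card : ℝ)) * T := by
        rw [hTdef, Finset.mul_sum]
        apply Finset.sum_congr rfl
        intro v _
        field_simp
    _ ≤ (2 / (S.card : ℝ)) * ((S.card : ℝ) / 2) := by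
        apply mul_le_mul_of_nonneg_left hT
        positivity
    _ = 1 := by field_simp
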